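/- For any x, y ∈ ℝ^n, any k ∈ {1,...,n}, and any m with 1 ≤ m ≤ k, iso(x)_k ≥ (average of iso(y) over entries k−m+1,...,k) − ‖x − y‖_SW / ψ(m); and for any m with 1 ≤ m ≤ n−k+1, iso(x)_k ≤ (average of iso(y) over entries k,...,k+m−1) + ‖x − y‖_SW / ψ(m). -/

import Mathlib

open MeasureTheory Filter ProbabilityTheory

noncomputable section

/-- The isotonic (monotone nondecreasing) cone in `ℝ^n` with the Euclidean norm. -/
def monoCone (n : ℕ) : Set (EuclideanSpace ℝ (Fin n)) :=
  {v | ∀ i j : Fin n, i ≤ j → v i ≤ v j}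

open Classical in
/-- Euclidean projection onto the monotone cone (chosen minimizer of the distance). -/
def isoProj {n : ℕ} (x : EuclideanSpace ℝ (Fin n)) : EuclideanSpace ℝ (Fin n) :=
  if h : ∃ z ∈ monoCone n, ∀ w ∈ monoCone n, dist x z ≤ dist x w then h.choose else x

/-- The map `A_i` replacing entries `i` and `i+1` (0-based) by their common average. -/
def avgMap {n : ℕ} (i : ℕ) (x : EuclideanSpace ℝ (Fin n)) : EuclideanSpace ℝ (Fin n) :=
  WithLp.toLp 2 (fun j => if h : i + 1 < n then
      (if (j : ℕ) = i ∨ (j : ℕ) = i + 1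
        then (x ⟨i, by omega⟩ + x ⟨i + 1, h⟩) / 2 else x j)
    else x j)

/-- One step of neighbor pooling: average entries `i`, `i+1` if they violate monotonicity. -/
def isoStep {n : ℕ} (i : ℕ) (x : EuclideanSpace ℝ (Fin n)) : EuclideanSpace ℝ (Fin n) :=
  if h : i + 1 < n then
    (if x ⟨i, by omega⟩ ≤ x ⟨i + 1, h⟩ then x else avgMap i x)
  else x

/-- Nonincreasing under neighbor averaging. -/
def NUNA {n : ℕ} (N : Seminorm ℝ (EuclideanSpace ℝ (Fin n))) : Prop :=
  ∀ x : EuclideanSpace ℝ (Fin n), ∀ i : ℕ, i + 1 < n → N (avgMap i x) ≤ N x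

/-- Average of the `m` entries of `x` starting at (0-based) index `a`. -/
def wavg {n : ℕ} (x : EuclideanSpace ℝ (Fin n)) (a m : ℕ) : ℝ :=
  (∑ t ∈ Finset.range m, if h : a + t < n then x ⟨a + t, h⟩ else 0) / m

/-- The sliding window seminorm with weight function `ψ`. -/
def swNorm {n : ℕ} (ψ : ℕ → ℝ) (x : EuclideanSpace ℝ (Fin n)) : ℝ :=
  sSup {r | ∃ a m : ℕ, 1 ≤ m ∧ a + m ≤ n ∧ r = |wavg x a m| * ψ m}

section Stmt12Aux
open Finset
open scoped RealInnerProductSpace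


private lemma psi_le_psi {n : ℕ} {ψ : ℕ → ℝ}
    (hψmono : ∀ m, 1 ≤ m → m + 1 ≤ n → ψ m ≤ ψ (m + 1)) :
    ∀ a b, 1 ≤ a → a ≤ b → b ≤ n → ψ a ≤ ψ b := by
  intro a b ha hab hbn
  induction b with
  | zero => omega
  | succ b ih =>
    rcases Nat.lt_or_ge a (b+1) with h | h
    · have hab' : a ≤ b := by omega
      exact le_trans (ih hab' (by omega)) (hψmono b (by omega) hbn)
    · have : a = b + 1 := by omega
      rw [this]

section conc
variable {n : ℕ} {ψ : ℕ → ℝ}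
  (hψconc : ∀ m, 2 ≤ m → m + 1 ≤ n →
      (((m : ℝ) - 1) / ψ (m - 1) + ((m : ℝ) + 1) / ψ (m + 1)) / 2 ≤ (m : ℝ) / ψ m)

private noncomputable def gg (ψ : ℕ → ℝ) (m : ℕ) : ℝ := (m : ℝ) / ψ m

include hψconc in
private lemma gstep : ∀ i, 1 ≤ i → i + 2 ≤ n →
    gg ψ (i+2) - gg ψ (i+1) ≤ gg ψ (i+1) - gg ψ i := by
  intro i h1 h2
  have := hψconc (i+1) (by omega) (by omega)
  simp only [gg]
  have e1 : (i + 1 : ℕ) - 1 = i := by omega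
  rw [e1] at this
  push_cast at this ⊢
  have e2 : (i:ℝ) + 1 - 1 = i := by ring
  rw [e2] at this
  have e3 : (i:ℝ) + 1 + 1 = i + 2 := by ring
  rw [e3] at this
  linarith

include hψconc in
private lemma lemD : ∀ t m, 1 ≤ m → m + t + 1 ≤ n →
    gg ψ (m+t+1) - gg ψ (m+t) ≤ gg ψ (m+1) - gg ψ m := by
  intro t
  induction t with
  | zero => intro m h1 h2; simp
  | succ t ih =>
    intro m h1 h2
    have h3 := gstep hψconc (m+t) (by omega) (by omega)
    have h4 := ih m h1 (by omega)
    have e1 : m + (t+1) + 1 = (m+t) + 2 := by omega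
    have e2 : m + (t+1) = (m+t) + 1 := by omega
    rw [e1, e2]
    linarith

include hψconc in
private lemma lemA : ∀ s ℓ, 1 ≤ ℓ → ℓ + s + 1 ≤ n →
    (s:ℝ) * (gg ψ (ℓ+s+1) - gg ψ (ℓ+s)) ≤ gg ψ (ℓ+s) - gg ψ ℓ := by
  intro s
  induction s with
  | zero => intro ℓ h1 h2; simp
  | succ s ih =>
    intro ℓ h1 h2
    have h3 := ih ℓ h1 (by omega)
    have h4 := gstep hψconc (ℓ+s) (by omega) (by omega)
    have e1 : ℓ + (s+1) + 1 = (ℓ+s) + 2 := by omega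
    have e2 : ℓ + (s+1) = (ℓ+s) + 1 := by omega
    rw [e1, e2]
    push_cast
    nlinarith [h3, h4]

include hψconc in
private lemma lemB : ∀ t m, 1 ≤ m → m + t ≤ n →
    gg ψ (m+t) - gg ψ m ≤ (t:ℝ) * (gg ψ (m+1) - gg ψ m) := by
  intro t
  induction t with
  | zero => intro m h1 h2; simp
  | succ t ih =>
    intro m h1 h2
    have h3 := ih m h1 (by omega)
    have h4 := lemD hψconc t m h1 (by omega)
    have e1 : m + (t+1) = (m+t) + 1 := by omega
    rw [e1]
    push_cast
    linarith

include hψconc in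
private lemma conc2 : ∀ ℓ s t, 1 ≤ ℓ → ℓ + s + t ≤ n →
    (s:ℝ) * gg ψ (ℓ+s+t) + (t:ℝ) * gg ψ ℓ ≤ ((s:ℝ) + (t:ℝ)) * gg ψ (ℓ+s) := by
  intro ℓ s t h1 h2
  rcases Nat.eq_zero_or_pos t with ht | ht
  · subst ht; simp
  rcases Nat.eq_zero_or_pos s with hs | hs
  · subst hs; simp
  have hA := lemA hψconc s ℓ h1 (by omega)
  have hB := lemB hψconc t (ℓ+s) (by omega) (by omega)
  have hs' : (0:ℝ) ≤ (s:ℝ) := by positivity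
  have ht' : (0:ℝ) ≤ (t:ℝ) := by positivity
  nlinarith [mul_le_mul_of_nonneg_left hA ht', mul_le_mul_of_nonneg_left hB hs']

include hψconc in
private lemma conc2w : ∀ ℓ s t, 1 ≤ ℓ → ℓ + s + t ≤ n →
    (s:ℝ) * (((ℓ+s+t : ℕ):ℝ) / ψ (ℓ+s+t)) + (t:ℝ) * (((ℓ:ℕ):ℝ) / ψ ℓ)
      ≤ ((s:ℝ) + (t:ℝ)) * (((ℓ+s : ℕ):ℝ) / ψ (ℓ+s)) := by
  intro ℓ s t h1 h2
  have := conc2 hψconc ℓ s t h1 h2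
  simpa [gg] using this

end conc

private theorem key (n : ℕ) (ψ : ℕ → ℝ)
    (hψpos : ∀ m, 1 ≤ m → m ≤ n → 0 < ψ m)
    (hψmono : ∀ m, 1 ≤ m → m + 1 ≤ n → ψ m ≤ ψ (m + 1))
    (hψconc : ∀ m, 2 ≤ m → m + 1 ≤ n →
      (((m : ℝ) - 1) / ψ (m - 1) + ((m : ℝ) + 1) / ψ (m + 1)) / 2 ≤ (m : ℝ) / ψ m)
    (x y u v : ℕ → ℝ) (N : ℝ) (hN : 0 ≤ N)
    (hu : ∀ i j, i ≤ j → j < n → u i ≤ u j)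
    (hv : ∀ i j, i ≤ j → j < n → v i ≤ v j)
    (hQ0 : ∀ i, i ≤ n → 0 ≤ ∑ t ∈ range i, (x t - u t))
    (hQn : ∑ t ∈ range n, (x t - u t) = 0)
    (hQj : ∀ i, 1 ≤ i → i < n → u (i-1) < u i → ∑ t ∈ range i, (x t - u t) = 0)
    (hP0 : ∀ i, i ≤ n → 0 ≤ ∑ t ∈ range i, (y t - v t))
    (hPj : ∀ i, 1 ≤ i → i < n → v (i-1) < v i → ∑ t ∈ range i, (y t - v t) = 0)
    (hW : ∀ a m, 1 ≤ m → a + m ≤ n → |∑ t ∈ Ico a (a+m), (y t - x t)| ≤ N * ((m:ℝ) / ψ m))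
    (a k m : ℕ) (hm : 1 ≤ m) (ham : a + m = k + 1) (hk : k < n) :
    ∑ t ∈ Ico a (k+1), v t ≤ (m:ℝ) * u k + N * ((m:ℝ) / ψ m) := by
  classical
  set Q : ℕ → ℝ := fun i => ∑ t ∈ range i, (x t - u t) with hQdef
  set P : ℕ → ℝ := fun i => ∑ t ∈ range i, (y t - v t) with hPdef
  have hak : a ≤ k := by omega
  have hmn : m ≤ n := by omega
  have hψm : 0 < ψ m := hψpos m hm hmn
  have hgm0 : 0 ≤ N * ((m:ℝ) / ψ m) := by positivity
  have hsum_le_vk : ∑ t ∈ Ico a (k+1), v t ≤ (m:ℝ) * v k := by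
    calc ∑ t ∈ Ico a (k+1), v t ≤ ∑ _t ∈ Ico a (k+1), v k := by
          refine sum_le_sum fun t ht => ?_
          rw [mem_Ico] at ht
          exact hv t k (by omega) hk
      _ = (m:ℝ) * v k := by
          rw [sum_const, Nat.card_Ico]
          have : k + 1 - a = m := by omega
          rw [this, nsmul_eq_mul]
  rcases le_or_gt (v k) (u k) with hD | hD
  · have : (m:ℝ) * v k ≤ (m:ℝ) * u k :=
      mul_le_mul_of_nonneg_left hD (by positivity)
    linarith
  -- main case
  have hex : ∃ j, k < j ∧ j ≤ n ∧ (Q j = 0 ∨ (j < n ∧ u (j-1) < u j)) :=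
    ⟨n, hk, le_refl n, Or.inl hQn⟩
  set j₀ := Nat.find hex with hj₀def
  obtain ⟨hj₀k, hj₀n, hj₀spec⟩ := Nat.find_spec hex
  have hQb : Q j₀ = 0 := by
    rcases hj₀spec with h | ⟨hlt, hjump⟩
    · exact h
    · exact hQj j₀ (by omega) hlt hjump


  have hm0' : (0:ℝ) ≤ (m:ℝ) := by positivity
  have huconst : ∀ t, k ≤ t → t < j₀ → u t = u k := by
    intro t
    induction t with
    | zero =>
      intro h1 _
      have hk0 : k = 0 := by omega
      rw [hk0]
    | succ t ih =>
      intro h1 h2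
      rcases Nat.lt_or_ge k (t+1) with h | h
      · have hmin := Nat.find_min hex (show t+1 < j₀ from h2)
        have ht1n : t + 1 < n := by omega
        have hne : u (t+1) ≤ u t := by
          by_contra hcon
          push_neg at hcon
          exact hmin ⟨h, by omega, Or.inr ⟨ht1n, by simpa using hcon⟩⟩
        have heq : u (t+1) = u t := le_antisymm hne (hu t (t+1) (by omega) ht1n)
        rw [heq]
        exact ih (by omega) (by omega)
      · have hkt : k = t + 1 := by omega
        rw [← hkt]
  -- window bound for windows [z, j₀) with P z = 0
  have hG : ∀ z, z ≤ k → P z = 0 →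
      ∑ t ∈ Ico z j₀, v t ≤ ((j₀ - z : ℕ):ℝ) * u k + N * (((j₀ - z : ℕ):ℝ) / ψ (j₀ - z)) := by
    intro z hzk hPz
    have hzj : z ≤ j₀ := by omega
    have h1 : ∑ t ∈ Ico z j₀, v t ≤ ∑ t ∈ Ico z j₀, y t := by
      have h2 : 0 ≤ ∑ t ∈ Ico z j₀, (y t - v t) := by
        rw [Finset.sum_Ico_eq_sub _ hzj]
        have := hP0 j₀ hj₀n
        rw [show (∑ t ∈ range z, (y t - v t)) = P z from rfl, hPz]
        simpa using this
      rw [sum_sub_distrib] at h2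
      linarith
    have h2 : ∑ t ∈ Ico z j₀, y t ≤ ∑ t ∈ Ico z j₀, x t
        + N * (((j₀ - z : ℕ):ℝ) / ψ (j₀ - z)) := by
      have hw := hW z (j₀ - z) (by omega) (by omega)
      rw [show z + (j₀ - z) = j₀ by omega] at hw
      have := le_trans (le_abs_self _) hw
      rw [sum_sub_distrib] at this
      linarith
    have h3 : ∑ t ∈ Ico z j₀, x t ≤ ∑ t ∈ Ico z j₀, u t := by
      have h4 : ∑ t ∈ Ico z j₀, (x t - u t) ≤ 0 := by
        rw [Finset.sum_Ico_eq_sub _ hzj]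
        have hz0 := hQ0 z (by omega)
        rw [show (∑ t ∈ range j₀, (x t - u t)) = Q j₀ from rfl, hQb]
        rw [show (∑ t ∈ range z, (x t - u t)) = Q z from rfl]
        linarith
      rw [sum_sub_distrib] at h4
      linarith
    have h4 : ∑ t ∈ Ico z j₀, u t ≤ ((j₀ - z : ℕ):ℝ) * u k := by
      calc ∑ t ∈ Ico z j₀, u t ≤ ∑ _t ∈ Ico z j₀, u k := by
            refine sum_le_sum fun t ht => ?_
            rw [mem_Ico] at ht
            rcases Nat.lt_or_ge t (k+1) with h | h
            · exact hu t k (by omega) hk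
            · rw [huconst t (by omega) ht.2]
        _ = ((j₀ - z : ℕ):ℝ) * u k := by rw [sum_const, Nat.card_Ico, nsmul_eq_mul]
    linarith
  -- rightmost P-zero ≤ a
  have hP0zero : P 0 = 0 := by simp [hPdef]
  set j₁ := Nat.findGreatest (fun i => P i = 0) a with hj₁def
  have hj₁a : j₁ ≤ a := Nat.findGreatest_le a
  have hPj₁ : P j₁ = 0 :=
    Nat.findGreatest_spec (P := fun i => P i = 0) (Nat.zero_le a) hP0zero
  have hnozero₁ : ∀ i, j₁ < i → i ≤ a → ¬ (P i = 0) := fun i hlt hle =>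
    Nat.findGreatest_is_greatest (P := fun i => P i = 0) hlt hle
  have hstep : ∀ i, 1 ≤ i → i < n → ¬ (P i = 0) → v (i-1) = v i := by
    intro i h1 h2 hne
    by_contra hne2
    have hlt : v (i-1) < v i := lt_of_le_of_ne (hv (i-1) i (by omega) h2) hne2
    exact hne (hPj i h1 h2 hlt)
  have hvconst : ∀ w, w < n → (∀ i, j₁ < i → i ≤ w → ¬ (P i = 0)) →
      ∀ z, j₁ ≤ z → z ≤ w → v z = v j₁ := by
    intro w hwn hno z
    induction z with
    | zero =>
      intro h1 _
      have hj0 : j₁ = 0 := by omega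
      rw [hj0]
    | succ z ih =>
      intro h1 h2
      rcases Nat.lt_or_ge j₁ (z+1) with h | h
      · have hst := hstep (z+1) (by omega) (by omega) (hno (z+1) h h2)
        simp only [Nat.add_sub_cancel] at hst
        rw [← hst]
        exact ih (by omega) (by omega)
      · have hj : j₁ = z + 1 := by omega
        rw [← hj]
  by_cases hzero : ∃ i, a < i ∧ i ≤ k ∧ P i = 0
  · -- main case: leftmost P-zero in (a, k]
    set j₂ := Nat.find hzero with hj₂def
    obtain ⟨hj₂a, hj₂k, hPj₂⟩ := Nat.find_spec hzero
    have hno2 : ∀ i, j₁ < i → i < j₂ → ¬ (P i = 0) := by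
      intro i h1 h2 hP
      rcases Nat.lt_or_ge a i with h | h
      · exact Nat.find_min hzero h2 ⟨h, by omega, hP⟩
      · exact hnozero₁ i h1 h hP
    have hvc : ∀ z, j₁ ≤ z → z < j₂ → v z = v j₁ := by
      intro z h1 h2
      exact hvconst (j₂ - 1) (by omega) (fun i hi1 hi2 => hno2 i hi1 (by omega)) z h1 (by omega)
    have hj₁j₂ : j₁ ≤ j₂ := by omega
    have hj₂j₀ : j₂ ≤ j₀ := by omega
    have haj₂ : a ≤ j₂ := by omega
    have hIc1 : ∑ t ∈ Ico j₁ j₂, v t = ((j₂ - j₁ : ℕ):ℝ) * v j₁ := by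
      calc ∑ t ∈ Ico j₁ j₂, v t = ∑ _t ∈ Ico j₁ j₂, v j₁ := by
            refine sum_congr rfl fun t ht => ?_
            rw [mem_Ico] at ht
            exact hvc t ht.1 ht.2
        _ = ((j₂ - j₁ : ℕ):ℝ) * v j₁ := by rw [sum_const, Nat.card_Ico, nsmul_eq_mul]
    have hIc2 : ∑ t ∈ Ico a j₂, v t = ((j₂ - a : ℕ):ℝ) * v j₁ := by
      calc ∑ t ∈ Ico a j₂, v t = ∑ _t ∈ Ico a j₂, v j₁ := by
            refine sum_congr rfl fun t ht => ?_
            rw [mem_Ico] at ht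
            exact hvc t (by omega) ht.2
        _ = ((j₂ - a : ℕ):ℝ) * v j₁ := by rw [sum_const, Nat.card_Ico, nsmul_eq_mul]
    have hGj₁ := hG j₁ (by omega) hPj₁
    have hGj₂ := hG j₂ hj₂k hPj₂
    rw [← Finset.sum_Ico_consecutive _ hj₁j₂ hj₂j₀, hIc1] at hGj₁
    set S₂ : ℝ := ∑ t ∈ Ico j₂ j₀, v t with hS₂def
    set α : ℝ := ((j₂ - a : ℕ):ℝ) with hαdef
    set β : ℝ := ((a - j₁ : ℕ):ℝ) with hβdef
    have hα1 : (1:ℝ) ≤ α := by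
      rw [hαdef]; exact_mod_cast (by omega : 1 ≤ j₂ - a)
    have hβ0 : (0:ℝ) ≤ β := by rw [hβdef]; positivity
    have hcαβ : ((j₂ - j₁ : ℕ):ℝ) = α + β := by
      rw [hαdef, hβdef, show j₂ - j₁ = (j₂ - a) + (a - j₁) by omega]; push_cast; ring
    have hCsplit : ∑ t ∈ Ico a j₀, v t = α * v j₁ + S₂ := by
      rw [← Finset.sum_Ico_consecutive _ haj₂ hj₂j₀, hIc2]
    have hL₁c : ((j₀ - j₁ : ℕ):ℝ) = ((j₀ - a : ℕ):ℝ) + β := by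
      rw [hβdef, show j₀ - j₁ = (j₀ - a) + (a - j₁) by omega]; push_cast; ring
    have hL₂c : ((j₀ - a : ℕ):ℝ) = ((j₀ - j₂ : ℕ):ℝ) + α := by
      rw [hαdef, show j₀ - a = (j₀ - j₂) + (j₂ - a) by omega]; push_cast; ring
    have hconc := conc2w hψconc (j₀ - j₂) (j₂ - a) (a - j₁) (by omega) (by omega)
    rw [show j₀ - j₂ + (j₂ - a) = j₀ - a by omega,
        show j₀ - a + (a - j₁) = j₀ - j₁ by omega] at hconc
    have hcomb : (α + β) * (∑ t ∈ Ico a j₀, v t) ≤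
        (α + β) * (((j₀ - a : ℕ):ℝ) * u k + N * (((j₀ - a : ℕ):ℝ) / ψ (j₀ - a))) := by
      have e1 : (α + β) * (∑ t ∈ Ico a j₀, v t) = α * ((α + β) * v j₁ + S₂) + β * S₂ := by
        rw [hCsplit]; ring
      rw [e1]
      have h5 : α * ((α + β) * v j₁ + S₂) ≤
          α * (((j₀ - j₁:ℕ):ℝ) * u k + N * (((j₀ - j₁:ℕ):ℝ) / ψ (j₀ - j₁))) := by
        apply mul_le_mul_of_nonneg_left _ (by linarith)
        rw [← hcαβ]; exact hGj₁
      have h6 : β * S₂ ≤ β * (((j₀ - j₂:ℕ):ℝ) * u k + N * (((j₀ - j₂:ℕ):ℝ) / ψ (j₀ - j₂))) :=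
        mul_le_mul_of_nonneg_left hGj₂ hβ0
      have h7 : α * (((j₀ - j₁:ℕ):ℝ) * u k) + β * (((j₀ - j₂:ℕ):ℝ) * u k)
          = (α + β) * (((j₀ - a:ℕ):ℝ) * u k) := by
        rw [hL₁c, hL₂c]; ring
      have h8 : α * (N * (((j₀ - j₁:ℕ):ℝ) / ψ (j₀ - j₁)))
            + β * (N * (((j₀ - j₂:ℕ):ℝ) / ψ (j₀ - j₂)))
          ≤ (α + β) * (N * (((j₀ - a:ℕ):ℝ) / ψ (j₀ - a))) := by
        have hNc := mul_le_mul_of_nonneg_left hconc hN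
        rw [hαdef, hβdef]
        calc ((j₂ - a:ℕ):ℝ) * (N * (((j₀ - j₁:ℕ):ℝ) / ψ (j₀ - j₁)))
              + ((a - j₁:ℕ):ℝ) * (N * (((j₀ - j₂:ℕ):ℝ) / ψ (j₀ - j₂)))
            = N * (((j₂ - a:ℕ):ℝ) * (((j₀ - j₁:ℕ):ℝ) / ψ (j₀ - j₁))
              + ((a - j₁:ℕ):ℝ) * (((j₀ - j₂:ℕ):ℝ) / ψ (j₀ - j₂))) := by ring
          _ ≤ N * ((((j₂ - a:ℕ):ℝ) + ((a - j₁:ℕ):ℝ)) * (((j₀ - a:ℕ):ℝ) / ψ (j₀ - a))) := hNc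
          _ = (((j₂ - a:ℕ):ℝ) + ((a - j₁:ℕ):ℝ)) * (N * (((j₀ - a:ℕ):ℝ) / ψ (j₀ - a))) := by ring
      linarith
    have hC : ∑ t ∈ Ico a j₀, v t ≤
        ((j₀ - a : ℕ):ℝ) * u k + N * (((j₀ - a : ℕ):ℝ) / ψ (j₀ - a)) := by
      have hpos : (0:ℝ) < α + β := by linarith
      exact le_of_mul_le_mul_left hcomb hpos
    have hk1j₀ : k + 1 ≤ j₀ := by omega
    have hsplit2 : ∑ t ∈ Ico a j₀, v t
        = ∑ t ∈ Ico a (k+1), v t + ∑ t ∈ Ico (k+1) j₀, v t :=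
      (Finset.sum_Ico_consecutive _ (by omega) hk1j₀).symm
    have htail : ((j₀ - (k+1) : ℕ):ℝ) * v k ≤ ∑ t ∈ Ico (k+1) j₀, v t := by
      calc ((j₀ - (k+1) : ℕ):ℝ) * v k = ∑ _t ∈ Ico (k+1) j₀, v k := by
            rw [sum_const, Nat.card_Ico, nsmul_eq_mul]
        _ ≤ ∑ t ∈ Ico (k+1) j₀, v t := by
            refine sum_le_sum fun t ht => ?_
            rw [mem_Ico] at ht
            exact hv k t (by omega) (by omega)
    have hMme : ((j₀ - a : ℕ):ℝ) = (m:ℝ) + ((j₀ - (k+1) : ℕ):ℝ) := by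
      rw [show j₀ - a = m + (j₀ - (k+1)) by omega]; push_cast; ring
    set e : ℝ := ((j₀ - (k+1) : ℕ):ℝ) with hedef
    have he0 : (0:ℝ) ≤ e := by rw [hedef]; positivity
    rw [hMme] at hC
    have hM1 : 1 ≤ j₀ - a := by omega
    have hMn : j₀ - a ≤ n := by omega
    have hψM : 0 < ψ (j₀ - a) := hψpos _ hM1 hMn
    have hψmM : ψ m ≤ ψ (j₀ - a) := psi_le_psi hψmono m (j₀ - a) hm (by omega) hMn
    rcases le_or_gt (N * (((m:ℝ) + e) / ψ (j₀ - a) - (m:ℝ) / ψ m)) (e * (v k - u k))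
      with hcase | hcase
    · linarith [hC, htail, hsplit2, hcase]
    · have he1 : (1:ℝ) ≤ e := by
        rcases Nat.eq_zero_or_pos (j₀ - (k+1)) with h | h
        · exfalso
          have hMm' : j₀ - a = m := by omega
          rw [hMm'] at hcase
          have he' : e = 0 := by rw [hedef, h]; simp
          rw [he'] at hcase
          simp at hcase
        · rw [hedef]; exact_mod_cast h
      have h6 : (m:ℝ) * (((m:ℝ) + e) / ψ (j₀ - a) - (m:ℝ) / ψ m) ≤ e * ((m:ℝ) / ψ m) := by
        have h5a : (1:ℝ) / ψ (j₀ - a) ≤ 1 / ψ m := one_div_le_one_div_of_le hψm hψmM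
        have h5b : ((m:ℝ) * ((m:ℝ) + e)) * (1 / ψ (j₀ - a))
            ≤ ((m:ℝ) * ((m:ℝ) + e)) * (1 / ψ m) :=
          mul_le_mul_of_nonneg_left h5a (mul_nonneg hm0' (by linarith))
        have e6 : (m:ℝ) * (((m:ℝ) + e) / ψ (j₀ - a) - (m:ℝ) / ψ m)
            = ((m:ℝ) * ((m:ℝ) + e)) * (1 / ψ (j₀ - a)) - ((m:ℝ) * (m:ℝ)) * (1 / ψ m) := by
          ring
        have e7 : e * ((m:ℝ) / ψ m) = (e * (m:ℝ)) * (1 / ψ m) := by ring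
        rw [e6, e7]
        have e8 : ((m:ℝ) * ((m:ℝ) + e)) * (1 / ψ m)
            = ((m:ℝ) * (m:ℝ)) * (1 / ψ m) + (e * (m:ℝ)) * (1 / ψ m) := by ring
        linarith [h5b, e8]
      have hm0 : (0:ℝ) < (m:ℝ) := by exact_mod_cast hm
      have h8 : (m:ℝ) * (e * (v k - u k))
          < (m:ℝ) * (N * (((m:ℝ) + e) / ψ (j₀ - a) - (m:ℝ) / ψ m)) :=
        mul_lt_mul_of_pos_left hcase hm0
      have h9 : (m:ℝ) * (N * (((m:ℝ) + e) / ψ (j₀ - a) - (m:ℝ) / ψ m))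
          ≤ N * (e * ((m:ℝ) / ψ m)) := by
        calc (m:ℝ) * (N * (((m:ℝ) + e) / ψ (j₀ - a) - (m:ℝ) / ψ m))
            = N * ((m:ℝ) * (((m:ℝ) + e) / ψ (j₀ - a) - (m:ℝ) / ψ m)) := by ring
          _ ≤ N * (e * ((m:ℝ) / ψ m)) := mul_le_mul_of_nonneg_left h6 hN
      have h10 : e * ((m:ℝ) * (v k - u k)) < e * (N * ((m:ℝ) / ψ m)) := by
        have e9 : e * ((m:ℝ) * (v k - u k)) = (m:ℝ) * (e * (v k - u k)) := by ring
        have e10 : e * (N * ((m:ℝ) / ψ m)) = N * (e * ((m:ℝ) / ψ m)) := by ring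
        rw [e9, e10]
        linarith [h8, h9]
      have h7 : (m:ℝ) * (v k - u k) < N * ((m:ℝ) / ψ m) :=
        lt_of_mul_lt_mul_left h10 he0
      linarith [hsum_le_vk, h7]
  · -- base case: no P-zero in (a, k]
    push_neg at hzero
    have hno : ∀ i, j₁ < i → i ≤ k → ¬ (P i = 0) := by
      intro i h1 h2
      rcases Nat.lt_or_ge a i with h | h
      · exact hzero i h h2
      · exact hnozero₁ i h1 h
    have hvk : ∀ z, j₁ ≤ z → z ≤ k → v z = v j₁ := hvconst k hk hno
    have hGj₁ := hG j₁ (by omega) hPj₁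
    have hlow : ((j₀ - j₁:ℕ):ℝ) * v k ≤ ∑ t ∈ Ico j₁ j₀, v t := by
      calc ((j₀ - j₁:ℕ):ℝ) * v k = ∑ _t ∈ Ico j₁ j₀, v k := by
            rw [sum_const, Nat.card_Ico, nsmul_eq_mul]
        _ ≤ ∑ t ∈ Ico j₁ j₀, v t := by
            refine sum_le_sum fun t ht => ?_
            rw [mem_Ico] at ht
            rcases Nat.lt_or_ge t (k+1) with h | h
            · rw [hvk t ht.1 (by omega), ← hvk k (by omega) (le_refl k)]
            · exact hv k t (by omega) (by omega)
    set L₁ := j₀ - j₁ with hL₁def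
    have hL₁m : m ≤ L₁ := by omega
    have hL₁n : L₁ ≤ n := by omega
    have hψL₁ : 0 < ψ L₁ := hψpos _ (by omega) hL₁n
    have hψmL : ψ m ≤ ψ L₁ := psi_le_psi hψmono m L₁ hm hL₁m hL₁n
    have hL₁0 : (0:ℝ) < (L₁:ℝ) := by exact_mod_cast (by omega : 0 < L₁)
    have hvkuk : v k - u k ≤ N / ψ L₁ := by
      have h1 := le_trans hlow hGj₁
      have h2 : (L₁:ℝ) * (v k - u k) ≤ (L₁:ℝ) * (N / ψ L₁) := by
        have h3 : N * ((L₁:ℝ) / ψ L₁) = (L₁:ℝ) * (N / ψ L₁) := by ring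
        linarith [h1, h3]
      exact le_of_mul_le_mul_left h2 hL₁0
    have hdiv : N / ψ L₁ ≤ N / ψ m := by
      have h1d := one_div_le_one_div_of_le hψm hψmL
      calc N / ψ L₁ = N * (1 / ψ L₁) := by ring
        _ ≤ N * (1 / ψ m) := mul_le_mul_of_nonneg_left h1d hN
        _ = N / ψ m := by ring
    have hfin : v k - u k ≤ N / ψ m := le_trans hvkuk hdiv
    have hrw : (m:ℝ) * (N / ψ m) = N * ((m:ℝ) / ψ m) := by ring
    have h2 := mul_le_mul_of_nonneg_left hfin hm0'
    linarith [hsum_le_vk, h2, hrw]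


private def pad {n : ℕ} (x : EuclideanSpace ℝ (Fin n)) : ℕ → ℝ :=
  fun t => if h : t < n then x ⟨t, h⟩ else 0

private lemma nonpos_of_forall_small (C B s₀ : ℝ) (h0 : 0 < s₀)
    (h : ∀ s, 0 < s → s ≤ s₀ → C ≤ s * B) : C ≤ 0 := by
  by_contra hC
  push_neg at hC
  rcases le_or_gt B 0 with hB | hB
  · have := h s₀ h0 le_rfl
    nlinarith
  · have hs : 0 < min s₀ (C / (2 * B)) := lt_min h0 (by positivity)
    have h1 := h _ hs (min_le_left _ _)
    have h2 : min s₀ (C / (2 * B)) * B ≤ (C / (2 * B)) * B :=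
      mul_le_mul_of_nonneg_right (min_le_right _ _) hB.le
    have h3 : (C / (2 * B)) * B = C / 2 := by field_simp
    linarith

private lemma isoProj_min {n : ℕ} (x : EuclideanSpace ℝ (Fin n)) :
    isoProj x ∈ monoCone n ∧ ∀ w ∈ monoCone n, dist x (isoProj x) ≤ dist x w := by
  classical
  have hne : (monoCone n).Nonempty := ⟨0, by intro i j _; simp⟩
  have hconv : Convex ℝ (monoCone n) := by
    intro p hp q hq s t hs ht _ i j hij
    have h1 : p i ≤ p j := hp i j hij
    have h2 : q i ≤ q j := hq i j hij
    have : s * p i + t * q i ≤ s * p j + t * q j :=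
      add_le_add (mul_le_mul_of_nonneg_left h1 hs) (mul_le_mul_of_nonneg_left h2 ht)
    simpa using this
  have hclosed : IsClosed (monoCone n) := by
    have heq : monoCone n =
        ⋂ (i : Fin n), ⋂ (j : Fin n), ⋂ (_ : i ≤ j),
          {v : EuclideanSpace ℝ (Fin n) | v i ≤ v j} := by
      ext w
      simp only [monoCone, Set.mem_setOf_eq, Set.mem_iInter]
    rw [heq]
    refine isClosed_iInter fun i => isClosed_iInter fun j => isClosed_iInter fun _ => ?_
    exact isClosed_le (by exact PiLp.continuous_apply 2 _ i) (by exact PiLp.continuous_apply 2 _ j)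
  have hmin : ∃ z ∈ monoCone n, ∀ w ∈ monoCone n, dist x z ≤ dist x w := by
    obtain ⟨z, hz, hz2⟩ :=
      exists_norm_eq_iInf_of_complete_convex hne hclosed.isComplete hconv x
    refine ⟨z, hz, fun w hw => ?_⟩
    rw [dist_eq_norm, dist_eq_norm, hz2]
    have hbdd : BddBelow (Set.range fun w : monoCone n => ‖x - (w : EuclideanSpace ℝ (Fin n))‖) := by
      refine ⟨0, ?_⟩
      rintro r ⟨w', rfl⟩
      exact norm_nonneg _
    exact ciInf_le hbdd ⟨w, hw⟩
  unfold isoProj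
  rw [dif_pos hmin]
  exact ⟨hmin.choose_spec.1, hmin.choose_spec.2⟩

private lemma isoProj_vi {n : ℕ} (x : EuclideanSpace ℝ (Fin n))
    (η : EuclideanSpace ℝ (Fin n)) (s₀ : ℝ) (hs₀ : 0 < s₀)
    (hdir : ∀ s : ℝ, 0 < s → s ≤ s₀ → (isoProj x + s • η) ∈ monoCone n) :
    ⟪x - isoProj x, η⟫ ≤ 0 := by
  obtain ⟨-, hmin⟩ := isoProj_min x
  have hb : ∀ s, 0 < s → s ≤ s₀ → 2 * ⟪x - isoProj x, η⟫ ≤ s * ‖η‖ ^ 2 := by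
    intro s h1 h2
    have h3 := hmin _ (hdir s h1 h2)
    rw [dist_eq_norm, dist_eq_norm] at h3
    have h4 : x - (isoProj x + s • η) = (x - isoProj x) - s • η := by abel
    rw [h4] at h3
    have h5 : ‖x - isoProj x‖ ^ 2 ≤ ‖(x - isoProj x) - s • η‖ ^ 2 :=
      pow_le_pow_left₀ (norm_nonneg _) h3 2
    rw [norm_sub_sq_real (x - isoProj x) (s • η), real_inner_smul_right] at h5
    have h8 : ‖s • η‖ ^ 2 = s ^ 2 * ‖η‖ ^ 2 := by
      rw [norm_smul]; simp [mul_pow, sq_abs]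
    rw [h8] at h5
    nlinarith [h5, h1]
  have := nonpos_of_forall_small (2 * ⟪x - isoProj x, η⟫) (‖η‖ ^ 2) s₀ hs₀ hb
  linarith

private def pref {n : ℕ} (i : ℕ) : EuclideanSpace ℝ (Fin n) :=
  WithLp.toLp 2 (fun t => if (t : ℕ) < i then (1 : ℝ) else 0)

private lemma inner_pref {n : ℕ} (z : EuclideanSpace ℝ (Fin n)) (i : ℕ) (hi : i ≤ n) :
    ⟪z, (pref i : EuclideanSpace ℝ (Fin n))⟫ = ∑ t ∈ range i, pad z t := by
  rw [PiLp.inner_apply]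
  have h1 : ∀ t : Fin n, ⟪z t, (pref i : EuclideanSpace ℝ (Fin n)) t⟫
      = (fun s : ℕ => if s < i then pad z s else 0) (t : ℕ) := by
    intro t
    simp only [pref, pad, RCLike.inner_apply, conj_trivial]
    by_cases h : (t : ℕ) < i
    · simp [h, t.isLt]
    · simp [h]
  rw [Finset.sum_congr rfl fun t _ => h1 t]
  rw [Fin.sum_univ_eq_sum_range (fun s => if s < i then pad z s else 0) n]
  rw [← Finset.sum_range_add_sum_Ico _ hi]
  have h2 : ∑ t ∈ Ico i n, (if t < i then pad z t else 0) = 0 := by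
    refine Finset.sum_eq_zero fun t ht => ?_
    rw [mem_Ico] at ht
    simp [Nat.not_lt.mpr ht.1]
  have h3 : ∑ t ∈ range i, (if t < i then pad z t else 0) = ∑ t ∈ range i, pad z t := by
    refine Finset.sum_congr rfl fun t ht => ?_
    rw [mem_range] at ht
    simp [ht]
  rw [h2, h3, add_zero]

private lemma sub_pad {n : ℕ} (x z : EuclideanSpace ℝ (Fin n)) (t : ℕ) :
    pad (x - z) t = pad x t - pad z t := by
  by_cases h : t < n
  · simp [pad, h]
  · simp [pad, h]

private lemma isoProj_cert {n : ℕ} (x : EuclideanSpace ℝ (Fin n)) :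
    (∀ i j, i ≤ j → j < n → pad (isoProj x) i ≤ pad (isoProj x) j) ∧
    (∀ i, i ≤ n → 0 ≤ ∑ t ∈ range i, (pad x t - pad (isoProj x) t)) ∧
    (∑ t ∈ range n, (pad x t - pad (isoProj x) t) = 0) ∧
    (∀ i, 1 ≤ i → i < n → pad (isoProj x) (i-1) < pad (isoProj x) i →
      ∑ t ∈ range i, (pad x t - pad (isoProj x) t) = 0) := by
  obtain ⟨hmem, -⟩ := isoProj_min x
  have hpadlt : ∀ (w : EuclideanSpace ℝ (Fin n)) (t : ℕ) (ht : t < n), pad w t = w ⟨t, ht⟩ := by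
    intro w t ht; simp [pad, ht]
  have happly : ∀ (s : ℝ) (η : EuclideanSpace ℝ (Fin n)) (j : Fin n),
      (isoProj x + s • η) j = isoProj x j + s * η j := by
    intro s η j
    simp [PiLp.add_apply, PiLp.smul_apply, smul_eq_mul]
  have hprefapp : ∀ (i : ℕ) (j : Fin n),
      (pref i : EuclideanSpace ℝ (Fin n)) j = if (j : ℕ) < i then (1:ℝ) else 0 := fun _ _ => rfl
  have hIi : ∀ i, i ≤ n → ⟪x - isoProj x, (pref i : EuclideanSpace ℝ (Fin n))⟫
      = ∑ t ∈ range i, (pad x t - pad (isoProj x) t) := by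
    intro i hi
    rw [inner_pref (x - isoProj x) i hi]
    exact Finset.sum_congr rfl fun t _ => sub_pad x (isoProj x) t
  -- (b) : Q i ≥ 0
  have hQ0 : ∀ i, i ≤ n → 0 ≤ ∑ t ∈ range i, (pad x t - pad (isoProj x) t) := by
    intro i hi
    have hdir : ∀ s : ℝ, 0 < s → s ≤ 1 →
        (isoProj x + s • (-(pref i) : EuclideanSpace ℝ (Fin n))) ∈ monoCone n := by
      intro s hs _ j₁ j₂ h12
      have h12' : (j₁ : ℕ) ≤ (j₂ : ℕ) := h12
      have e1 : (isoProj x + s • (-(pref i) : EuclideanSpace ℝ (Fin n))) j₁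
          = isoProj x j₁ - s * (if (j₁ : ℕ) < i then (1:ℝ) else 0) := by
        rw [happly]
        simp [hprefapp]
        ring
      have e2 : (isoProj x + s • (-(pref i) : EuclideanSpace ℝ (Fin n))) j₂
          = isoProj x j₂ - s * (if (j₂ : ℕ) < i then (1:ℝ) else 0) := by
        rw [happly]
        simp [hprefapp]
        ring
      rw [e1, e2]
      have hm := hmem j₁ j₂ h12
      by_cases c1 : (j₁ : ℕ) < i <;> by_cases c2 : (j₂ : ℕ) < i
      · simp [c1, c2]; linarith
      · simp [c1, c2]; linarith
      · omega
      · simp [c1, c2]; linarith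
    have := isoProj_vi x (-(pref i)) 1 one_pos hdir
    rw [inner_neg_right, hIi i hi] at this
    linarith
  refine ⟨?_, hQ0, ?_, ?_⟩
  · intro i j hij hj
    have hi : i < n := lt_of_le_of_lt hij hj
    rw [hpadlt _ i hi, hpadlt _ j hj]
    exact hmem ⟨i, hi⟩ ⟨j, hj⟩ (by exact hij)
  · -- Q n = 0
    have hdir : ∀ s : ℝ, 0 < s → s ≤ 1 →
        (isoProj x + s • (pref n : EuclideanSpace ℝ (Fin n))) ∈ monoCone n := by
      intro s hs _ j₁ j₂ h12
      rw [happly, happly, hprefapp, hprefapp]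
      simp only [j₁.isLt, j₂.isLt, if_true]
      have hm := hmem j₁ j₂ h12
      linarith
    have h1 := isoProj_vi x (pref n) 1 one_pos hdir
    rw [hIi n le_rfl] at h1
    exact le_antisymm h1 (hQ0 n le_rfl)
  · -- jump ⇒ Q i = 0
    intro i h1i hin hjump
    have hi1n : i - 1 < n := by omega
    rw [hpadlt _ (i-1) hi1n, hpadlt _ i hin] at hjump
    set gap : ℝ := isoProj x ⟨i, hin⟩ - isoProj x ⟨i-1, hi1n⟩ with hgapdef
    have hgap : 0 < gap := by rw [hgapdef]; linarith
    have hdir : ∀ s : ℝ, 0 < s → s ≤ gap →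
        (isoProj x + s • (pref i : EuclideanSpace ℝ (Fin n))) ∈ monoCone n := by
      intro s hs hsg j₁ j₂ h12
      have h12' : (j₁ : ℕ) ≤ (j₂ : ℕ) := h12
      rw [happly, happly, hprefapp, hprefapp]
      have hm := hmem j₁ j₂ h12
      by_cases c1 : (j₁ : ℕ) < i <;> by_cases c2 : (j₂ : ℕ) < i
      · simp [c1, c2]; linarith
      · -- j₁ < i ≤ j₂
        simp only [c1, c2, if_true, if_false]
        have hb1 : isoProj x j₁ ≤ isoProj x ⟨i-1, hi1n⟩ :=
          hmem j₁ ⟨i-1, hi1n⟩ (by simp [Fin.le_def]; omega)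
        have hb2 : isoProj x ⟨i, hin⟩ ≤ isoProj x j₂ :=
          hmem ⟨i, hin⟩ j₂ (by simp [Fin.le_def]; omega)
        rw [hgapdef] at hsg
        simp only [mul_one, mul_zero, add_zero]
        linarith
      · omega
      · simp [c1, c2]; linarith
    have h2 := isoProj_vi x (pref i) gap hgap hdir
    rw [hIi i (by omega)] at h2
    exact le_antisymm h2 (hQ0 i (by omega))

private lemma wavg_eq {n : ℕ} (z : EuclideanSpace ℝ (Fin n)) (a m : ℕ) :
    wavg z a m = (∑ t ∈ Ico a (a+m), pad z t) / m := by
  rw [wavg]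
  congr 1
  rw [Finset.sum_Ico_eq_sum_range]
  simp only [Nat.add_sub_cancel_left]
  exact Finset.sum_congr rfl fun t _ => rfl

private lemma swNorm_mem_le {n : ℕ} (ψ : ℕ → ℝ) (z : EuclideanSpace ℝ (Fin n))
    (a m : ℕ) (hm : 1 ≤ m) (hmn : a + m ≤ n) :
    |wavg z a m| * ψ m ≤ swNorm ψ z := by
  have hbdd : BddAbove {r | ∃ a m : ℕ, 1 ≤ m ∧ a + m ≤ n ∧ r = |wavg z a m| * ψ m} := by
    have hsub : {r | ∃ a m : ℕ, 1 ≤ m ∧ a + m ≤ n ∧ r = |wavg z a m| * ψ m} ⊆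
        ↑((Finset.range (n+1) ×ˢ Finset.range (n+1)).image
          fun p => |wavg z p.1 p.2| * ψ p.2) := by
      rintro r ⟨a', m', h1, h2, rfl⟩
      simp only [Finset.coe_image, Set.mem_image, Finset.mem_coe, Finset.mem_product,
        Finset.mem_range]
      exact ⟨(a', m'), ⟨by omega, by omega⟩, rfl⟩
    exact ((Finset.finite_toSet _).subset hsub).bddAbove
  exact le_csSup hbdd ⟨a, m, hm, hmn, rfl⟩

private lemma swNorm_nn {n : ℕ} (ψ : ℕ → ℝ) (hn : 1 ≤ n) (hψ1 : 0 < ψ 1)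
    (z : EuclideanSpace ℝ (Fin n)) : 0 ≤ swNorm ψ z := by
  have h1 := swNorm_mem_le ψ z 0 1 le_rfl (by omega)
  have h2 : 0 ≤ |wavg z 0 1| * ψ 1 := mul_nonneg (abs_nonneg _) hψ1.le
  linarith

private lemma window_bound {n : ℕ} (ψ : ℕ → ℝ) (x y : EuclideanSpace ℝ (Fin n))
    (a m : ℕ) (hm : 1 ≤ m) (hmn : a + m ≤ n) (hψm : 0 < ψ m) :
    |∑ t ∈ Ico a (a+m), (pad y t - pad x t)| ≤ swNorm ψ (x - y) * ((m:ℝ) / ψ m) := by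
  have h1 := swNorm_mem_le ψ (x - y) a m hm hmn
  rw [wavg_eq] at h1
  have hsum : ∑ t ∈ Ico a (a+m), pad (x - y) t = ∑ t ∈ Ico a (a+m), (pad x t - pad y t) :=
    Finset.sum_congr rfl fun t _ => sub_pad x y t
  rw [hsum] at h1
  have hm0 : (0:ℝ) < m := by exact_mod_cast hm
  have h2 : |∑ t ∈ Ico a (a+m), (pad y t - pad x t)|
      = |∑ t ∈ Ico a (a+m), (pad x t - pad y t)| := by
    rw [← abs_neg]
    congr 1
    rw [← Finset.sum_neg_distrib]
    exact Finset.sum_congr rfl fun t _ => by ring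
  rw [h2]
  rw [abs_div, Nat.abs_cast, div_mul_eq_mul_div, div_le_iff₀ hm0] at h1
  rw [show swNorm ψ (x - y) * ((m:ℝ) / ψ m) = (swNorm ψ (x - y) * (m:ℝ)) / ψ m by ring,
    le_div_iff₀ hψm]
  exact h1

private lemma sum_reflect (f : ℕ → ℝ) (a b n : ℕ) (hb : b ≤ n) :
    ∑ t ∈ Ico a b, f (n - 1 - t) = ∑ t ∈ Ico (n - b) (n - a), f t := by
  rcases Nat.lt_or_ge a b with hab | hab
  · refine Finset.sum_nbij' (fun t => n - 1 - t) (fun t => n - 1 - t) ?_ ?_ ?_ ?_ ?_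
    · intro t ht; rw [mem_Ico] at ht ⊢; omega
    · intro t ht; rw [mem_Ico] at ht ⊢; omega
    · intro t ht; rw [mem_Ico] at ht; omega
    · intro t ht; rw [mem_Ico] at ht; omega
    · intro t ht; rfl
  · rw [Finset.Ico_eq_empty (by omega : ¬ a < b), Finset.Ico_eq_empty (by omega : ¬ n - b < n - a)]
    simp

private def revseq (n : ℕ) (f : ℕ → ℝ) : ℕ → ℝ := fun t => -(f (n - 1 - t))

private lemma rev_mono (n : ℕ) (up : ℕ → ℝ) (hu : ∀ i j, i ≤ j → j < n → up i ≤ up j) :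
    ∀ i j, i ≤ j → j < n → revseq n up i ≤ revseq n up j := by
  intro i j hij hj
  simp only [revseq, neg_le_neg_iff]
  exact hu (n-1-j) (n-1-i) (by omega) (by omega)

private lemma rev_sum (n : ℕ) (xp up : ℕ → ℝ) (i : ℕ) (hi : i ≤ n) :
    ∑ t ∈ range i, (revseq n xp t - revseq n up t)
      = ∑ t ∈ range (n - i), (xp t - up t) - ∑ t ∈ range n, (xp t - up t) := by
  have h1 : ∀ t, revseq n xp t - revseq n up t = (fun s => up s - xp s) (n - 1 - t) := by
    intro t; simp only [revseq]; ring
  rw [Finset.sum_congr rfl fun t _ => h1 t]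
  rw [range_eq_Ico, sum_reflect (fun s => up s - xp s) 0 i n hi, Nat.sub_zero]
  rw [Finset.sum_Ico_eq_sub _ (by omega : n - i ≤ n)]
  have h2 : ∀ (s : Finset ℕ), ∑ t ∈ s, (up t - xp t) = -∑ t ∈ s, (xp t - up t) := by
    intro s
    rw [← Finset.sum_neg_distrib]
    exact Finset.sum_congr rfl fun t _ => by ring
  rw [h2, h2]
  simp only [range_eq_Ico]
  ring

theorem stmt12 (n : ℕ) (ψ : ℕ → ℝ)
    (hψpos : ∀ m, 1 ≤ m → m ≤ n → 0 < ψ m)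
    (hψmono : ∀ m, 1 ≤ m → m + 1 ≤ n → ψ m ≤ ψ (m + 1))
    (hψconc : ∀ m, 2 ≤ m → m + 1 ≤ n →
      (((m : ℝ) - 1) / ψ (m - 1) + ((m : ℝ) + 1) / ψ (m + 1)) / 2 ≤ (m : ℝ) / ψ m)
    (x y : EuclideanSpace ℝ (Fin n)) (k : ℕ) (hk : k < n) :
    (∀ m : ℕ, 1 ≤ m → m ≤ k + 1 →
      wavg (isoProj y) (k + 1 - m) m - swNorm ψ (x - y) / ψ m ≤ isoProj x ⟨k, hk⟩) ∧
    (∀ m : ℕ, 1 ≤ m → m ≤ n - k →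
      isoProj x ⟨k, hk⟩ ≤ wavg (isoProj y) k m + swNorm ψ (x - y) / ψ m) := by
  have hn1 : 1 ≤ n := by omega
  obtain ⟨hux, hxQ0, hxQn, hxQj⟩ := isoProj_cert x
  obtain ⟨huy, hyQ0, hyQn, hyQj⟩ := isoProj_cert y
  have hψ1 : 0 < ψ 1 := hψpos 1 le_rfl hn1
  have hN0 : 0 ≤ swNorm ψ (x - y) := swNorm_nn ψ hn1 hψ1 (x - y)
  set N := swNorm ψ (x - y) with hNdef
  have hW : ∀ a m, 1 ≤ m → a + m ≤ n →
      |∑ t ∈ Ico a (a+m), (pad y t - pad x t)| ≤ N * ((m:ℝ) / ψ m) := fun a m h1 h2 =>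
    window_bound ψ x y a m h1 h2 (hψpos m h1 (by omega))
  have hpadk : pad (isoProj x) k = isoProj x ⟨k, hk⟩ := by simp [pad, hk]
  constructor
  · intro m hm1 hmk
    have hψm : 0 < ψ m := hψpos m hm1 (by omega)
    have hm0 : (0:ℝ) < m := by exact_mod_cast hm1
    have hkey := key n ψ hψpos hψmono hψconc (pad x) (pad y) (pad (isoProj x))
      (pad (isoProj y)) N hN0 hux huy hxQ0 hxQn hxQj hyQ0 hyQj hW
      (k + 1 - m) k m hm1 (by omega) hk
    have hwv : wavg (isoProj y) (k+1-m) m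
        = (∑ t ∈ Ico (k+1-m) (k+1), pad (isoProj y) t) / m := by
      rw [wavg_eq, show (k+1-m) + m = k+1 by omega]
    rw [hwv, ← hpadk, sub_le_iff_le_add, div_le_iff₀ hm0]
    have e1 : (pad (isoProj x) k + N / ψ m) * m
        = (m:ℝ) * pad (isoProj x) k + N * ((m:ℝ) / ψ m) := by ring
    rw [e1]
    exact hkey
  · intro m hm1 hmk
    have hψm : 0 < ψ m := hψpos m hm1 (by omega)
    have hm0 : (0:ℝ) < m := by exact_mod_cast hm1
    have hkmn : k + m ≤ n := by omega
    -- reversed certificates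
    have hu' := rev_mono n (pad (isoProj x)) hux
    have hv' := rev_mono n (pad (isoProj y)) huy
    have hQ0' : ∀ i, i ≤ n →
        0 ≤ ∑ t ∈ range i, (revseq n (pad x) t - revseq n (pad (isoProj x)) t) := by
      intro i hi
      rw [rev_sum n _ _ i hi, hxQn]
      have := hxQ0 (n - i) (by omega)
      linarith
    have hQn' : ∑ t ∈ range n, (revseq n (pad x) t - revseq n (pad (isoProj x)) t) = 0 := by
      rw [rev_sum n _ _ n le_rfl, hxQn]
      simp
    have hQj' : ∀ i, 1 ≤ i → i < n →
        revseq n (pad (isoProj x)) (i-1) < revseq n (pad (isoProj x)) i →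
        ∑ t ∈ range i, (revseq n (pad x) t - revseq n (pad (isoProj x)) t) = 0 := by
      intro i h1 h2 hjump
      rw [rev_sum n _ _ i (by omega), hxQn]
      simp only [revseq, neg_lt_neg_iff] at hjump
      rw [show n - 1 - (i - 1) = n - i by omega] at hjump
      have := hxQj (n - i) (by omega) (by omega) (by
        rw [show n - i - 1 = n - 1 - i by omega]; exact hjump)
      rw [this]
      ring
    have hP0' : ∀ i, i ≤ n →
        0 ≤ ∑ t ∈ range i, (revseq n (pad y) t - revseq n (pad (isoProj y)) t) := by
      intro i hi
      rw [rev_sum n _ _ i hi, hyQn]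
      have := hyQ0 (n - i) (by omega)
      linarith
    have hPj' : ∀ i, 1 ≤ i → i < n →
        revseq n (pad (isoProj y)) (i-1) < revseq n (pad (isoProj y)) i →
        ∑ t ∈ range i, (revseq n (pad y) t - revseq n (pad (isoProj y)) t) = 0 := by
      intro i h1 h2 hjump
      rw [rev_sum n _ _ i (by omega), hyQn]
      simp only [revseq, neg_lt_neg_iff] at hjump
      rw [show n - 1 - (i - 1) = n - i by omega] at hjump
      have := hyQj (n - i) (by omega) (by omega) (by
        rw [show n - i - 1 = n - 1 - i by omega]; exact hjump)
      rw [this]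
      ring
    have hW' : ∀ a m', 1 ≤ m' → a + m' ≤ n →
        |∑ t ∈ Ico a (a+m'), (revseq n (pad y) t - revseq n (pad x) t)|
          ≤ N * ((m':ℝ) / ψ m') := by
      intro a m' h1 h2
      have he : ∀ t, revseq n (pad y) t - revseq n (pad x) t
          = (fun s => pad x s - pad y s) (n - 1 - t) := by
        intro t; simp only [revseq]; ring
      rw [Finset.sum_congr rfl fun t _ => he t,
        sum_reflect (fun s => pad x s - pad y s) a (a+m') n h2]
      have hneg : ∑ t ∈ Ico (n-(a+m')) (n-a), (pad x t - pad y t)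
          = -∑ t ∈ Ico (n-(a+m')) (n-a), (pad y t - pad x t) := by
        rw [← Finset.sum_neg_distrib]
        exact Finset.sum_congr rfl fun t _ => by ring
      rw [hneg, abs_neg]
      have := hW (n-(a+m')) m' h1 (by omega)
      rw [show n-(a+m') + m' = n - a by omega] at this
      exact this
    have hkey := key n ψ hψpos hψmono hψconc (revseq n (pad x)) (revseq n (pad y))
      (revseq n (pad (isoProj x))) (revseq n (pad (isoProj y))) N hN0 hu' hv'
      hQ0' hQn' hQj' hP0' hPj' hW'
      (n - k - m) (n - 1 - k) m hm1 (by omega) (by omega)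
    rw [show n - 1 - k + 1 = n - k by omega] at hkey
    have hL : ∑ t ∈ Ico (n-k-m) (n-k), revseq n (pad (isoProj y)) t
        = -∑ t ∈ Ico k (k+m), pad (isoProj y) t := by
      have he : ∀ t, revseq n (pad (isoProj y)) t
          = (fun s => -(pad (isoProj y) s)) (n - 1 - t) := fun t => rfl
      rw [Finset.sum_congr rfl fun t _ => he t,
        sum_reflect (fun s => -(pad (isoProj y) s)) (n-k-m) (n-k) n (by omega)]
      rw [show n - (n-k) = k by omega, show n - (n-k-m) = k + m by omega]
      rw [← Finset.sum_neg_distrib]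
    have hR : revseq n (pad (isoProj x)) (n - 1 - k) = -(pad (isoProj x) k) := by
      simp only [revseq]
      rw [show n - 1 - (n - 1 - k) = k by omega]
    rw [hL, hR] at hkey
    have hwv : wavg (isoProj y) k m = (∑ t ∈ Ico k (k+m), pad (isoProj y) t) / m :=
      wavg_eq _ _ _
    rw [hwv, ← hpadk, ← sub_le_iff_le_add, le_div_iff₀ hm0]
    have e2 : (pad (isoProj x) k - N / ψ m) * (m:ℝ)
        = (m:ℝ) * pad (isoProj x) k - N * ((m:ℝ) / ψ m) := by ring
    linarith [hkey, e2]

end Stmt12Aux
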